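/- Let G : [0,∞) → ℝ be continuous and convex with G(0) ≤ 0, and suppose there exists θ > 0 with G(θ) > 0 and ∫_θ^∞ dx/G(x) < ∞. Then r := sup{x ≥ 0 : G(x) ≤ 0} is finite, G(r) = 0, and there exists a continuous nonincreasing function v : (0,∞) → (r,∞) such that: (i) v(t) − v(s) = −∫_s^t G(v(w)) dw for all 0 < s ≤ t; (ii) v(t) → ∞ as t → 0+; (iii) v(t) → r as t → ∞; and (iv) v is minimal, in the sense that every continuous function w : (0,∞) → [0,∞) satisfying w(t) − w(s) = −∫_s^t G(w(w')) dw' for all 0 < s ≤ t and w(t) → ∞ as t → 0+ satisfies w(t) ≥ v(t) for every t > 0. -/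

import Mathlib

open MeasureTheory Real Filter Set

private lemma stmt12_comp
    (G : ℝ → ℝ) (hGcont : ContinuousOn G (Set.Ici 0)) {r : ℝ} (hr : 0 ≤ r)
    (hmono : ∀ a b : ℝ, 0 ≤ a → r < b → a ≤ b → G a ≤ G b)
    (u w : ℝ → ℝ) (hu : ContinuousOn u (Set.Ioi 0)) (hw : ContinuousOn w (Set.Ioi 0))
    (hur : ∀ x : ℝ, 0 < x → r < u x) (hw0 : ∀ x : ℝ, 0 < x → 0 ≤ w x)
    (hueq : ∀ s t : ℝ, 0 < s → s ≤ t → u t - u s = -∫ x in s..t, G (u x))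
    (hweq : ∀ s t : ℝ, 0 < s → s ≤ t → w t - w s = -∫ x in s..t, G (w x))
    {s t : ℝ} (hs : 0 < s) (hst : s ≤ t) (hsw : u s ≤ w s) : u t ≤ w t := by
  by_contra hcon
  push_neg at hcon
  set A : Set ℝ := {τ | τ ∈ Set.Icc s t ∧ u τ ≤ w τ} with hA
  have hsA : s ∈ A := ⟨⟨le_refl s, hst⟩, hsw⟩
  have hIcc : Set.Icc s t ⊆ Set.Ioi 0 := fun x hx => lt_of_lt_of_le hs hx.1
  have hcont' : ContinuousOn (fun x => w x - u x) (Set.Icc s t) :=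
    (hw.mono hIcc).sub (hu.mono hIcc)
  have hAclosed : IsClosed A := by
    have hAeq : A = Set.Icc s t ∩ (fun x => w x - u x) ⁻¹' (Set.Ici 0) := by
      ext x
      simp only [hA, Set.mem_setOf_eq, Set.mem_inter_iff, Set.mem_preimage, Set.mem_Ici,
        sub_nonneg]
    rw [hAeq]
    exact hcont'.preimage_isClosed_of_isClosed isClosed_Icc isClosed_Ici
  have hAcpt : IsCompact A := isCompact_Icc.of_isClosed_subset hAclosed fun x hx => hx.1
  set σ := sSup A with hσ
  have hσA : σ ∈ A := hAcpt.sSup_mem ⟨s, hsA⟩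
  have hσpos : 0 < σ := lt_of_lt_of_le hs hσA.1.1
  have hσt : σ < t := by
    rcases lt_or_eq_of_le hσA.1.2 with h | h
    · exact h
    · rw [h] at hσA; exact absurd hσA.2 (not_le.2 hcon)
  have hlt : ∀ τ, σ < τ → τ ≤ t → w τ < u τ := by
    intro τ h1 h2
    by_contra h
    push_neg at h
    have : τ ∈ A := ⟨⟨hσA.1.1.trans h1.le, h2⟩, h⟩
    exact absurd (le_csSup hAcpt.bddAbove this) (not_le.2 h1)
  -- integrability of G ∘ u and G ∘ w on [σ, t]
  have hsubI : Set.uIcc σ t ⊆ Set.Ioi 0 := by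
    rw [Set.uIcc_of_le hσt.le]
    exact fun x hx => lt_of_lt_of_le hσpos hx.1
  have hGu : ContinuousOn (fun x => G (u x)) (Set.uIcc σ t) :=
    hGcont.comp (hu.mono hsubI) fun x hx => Set.mem_Ici.2 (hr.trans (hur x (hsubI hx)).le)
  have hGw : ContinuousOn (fun x => G (w x)) (Set.uIcc σ t) :=
    hGcont.comp (hw.mono hsubI) fun x hx => Set.mem_Ici.2 (hw0 x (hsubI hx))
  have hGui : IntervalIntegrable (fun x => G (u x)) volume σ t := hGu.intervalIntegrable
  have hGwi : IntervalIntegrable (fun x => G (w x)) volume σ t := hGw.intervalIntegrable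
  -- pointwise comparison a.e.
  have hae : (fun x => G (w x)) ≤ᵐ[volume.restrict (Set.Icc σ t)] fun x => G (u x) := by
    have hres : volume.restrict (Set.Icc σ t) = volume.restrict (Set.Ioc σ t) :=
      (Measure.restrict_congr_set Ioc_ae_eq_Icc).symm
    rw [hres]
    refine (ae_restrict_iff' measurableSet_Ioc).2 (ae_of_all _ fun x hx => ?_)
    have hx0 : 0 < x := hσpos.trans hx.1
    exact hmono (w x) (u x) (hw0 x hx0) (hur x hx0) (hlt x hx.1 hx.2).le
  have hint_le : (∫ x in σ..t, G (w x)) ≤ ∫ x in σ..t, G (u x) :=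
    intervalIntegral.integral_mono_ae_restrict hσt.le hGwi hGui hae
  have h1 := hueq σ t hσpos hσt.le
  have h2 := hweq σ t hσpos hσt.le
  have hσle : u σ ≤ w σ := hσA.2
  linarith

/-- Let `G` be continuous and convex on `[0,∞)` with
`G(0) ≤ 0`, satisfying Grey's condition.  Then `r = sup{x ≥ 0 : G(x) ≤ 0}` is
finite with `G(r) = 0`, and there is a minimal continuous nonincreasing
solution `v : (0,∞) → (r,∞)` of `v' = -G(v)` with `v(0+) = ∞` and
`v(∞) = r`. -/
theorem stmt_12
    (G : ℝ → ℝ)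
    (hGcont : ContinuousOn G (Set.Ici 0))
    (hGconv : ConvexOn ℝ (Set.Ici 0) G)
    (hG0 : G 0 ≤ 0)
    (hGrey : ∃ θ : ℝ, 0 < θ ∧ 0 < G θ ∧
      IntegrableOn (fun x => 1 / G x) (Set.Ici θ)) :
    ∃ r : ℝ, IsLUB {x : ℝ | 0 ≤ x ∧ G x ≤ 0} r ∧ G r = 0 ∧
      ∃ v : ℝ → ℝ,
        ContinuousOn v (Set.Ioi 0) ∧
        AntitoneOn v (Set.Ioi 0) ∧
        (∀ t : ℝ, 0 < t → r < v t) ∧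
        (∀ s t : ℝ, 0 < s → s ≤ t → v t - v s = -∫ w in s..t, G (v w)) ∧
        Filter.Tendsto v (nhdsWithin 0 (Set.Ioi 0)) Filter.atTop ∧
        Filter.Tendsto v Filter.atTop (nhds r) ∧
        (∀ w : ℝ → ℝ, ContinuousOn w (Set.Ioi 0) →
          (∀ t : ℝ, 0 < t → 0 ≤ w t) →
          (∀ s t : ℝ, 0 < s → s ≤ t → w t - w s = -∫ x in s..t, G (w x)) →
          Filter.Tendsto w (nhdsWithin 0 (Set.Ioi 0)) Filter.atTop →
          ∀ t : ℝ, 0 < t → v t ≤ w t) := by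
  obtain ⟨θ, hθ0, hGθ, hint⟩ := hGrey
  set S := {x : ℝ | 0 ≤ x ∧ G x ≤ 0} with hSdef
  -- G is positive beyond θ
  have hposθ : ∀ x : ℝ, θ < x → 0 < G x := by
    intro x hx
    have hx0 : (0:ℝ) < x := hθ0.trans hx
    have hb0 : 0 < θ / x := div_pos hθ0 hx0
    have hb1 : θ / x < 1 := (div_lt_one hx0).2 hx
    have hcomb := hGconv.2 (Set.mem_Ici.2 (le_refl 0)) (Set.mem_Ici.2 hx0.le)
      (by linarith : (0:ℝ) ≤ 1 - θ / x) hb0.le (by ring)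
    have heq : (1 - θ / x) • (0:ℝ) + (θ / x) • x = θ := by
      simp only [smul_eq_mul, mul_zero, zero_add]
      field_simp
    rw [heq] at hcomb
    simp only [smul_eq_mul] at hcomb
    have ha0 : (1 - θ / x) * G 0 ≤ 0 :=
      mul_nonpos_of_nonneg_of_nonpos (by linarith) hG0
    by_contra h
    push_neg at h
    have : θ / x * G x ≤ 0 := mul_nonpos_of_nonneg_of_nonpos hb0.le h
    linarith
  have hSub : ∀ x ∈ S, x ≤ θ := by
    intro x hx
    by_contra h
    push_neg at h
    exact absurd hx.2 (not_le.2 (hposθ x h))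
  have hS0 : (0:ℝ) ∈ S := ⟨le_refl 0, hG0⟩
  have hSclosed : IsClosed S := by
    have : S = Set.Ici 0 ∩ G ⁻¹' (Set.Iic 0) := by ext x; simp [hSdef]
    rw [this]
    exact hGcont.preimage_isClosed_of_isClosed isClosed_Ici isClosed_Iic
  have hScpt : IsCompact S :=
    isCompact_Icc.of_isClosed_subset hSclosed fun x hx => ⟨hx.1, hSub x hx⟩
  set r := sSup S with hrdef
  have hrS : r ∈ S := hScpt.sSup_mem ⟨0, hS0⟩
  have hlub : IsLUB S r := isLUB_csSup ⟨0, hS0⟩ ⟨θ, hSub⟩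
  have hr0 : 0 ≤ r := hrS.1
  have hrθ : r ≤ θ := hSub r hrS
  have hposr : ∀ x : ℝ, r < x → 0 < G x := by
    intro x hx
    by_contra h
    push_neg at h
    exact absurd (hlub.1 ⟨hr0.trans hx.le, h⟩) (not_le.2 hx)
  have hrθ' : r < θ := lt_of_le_of_ne hrθ (fun h => by rw [h] at hrS; linarith [hrS.2])
  have hGr : G r = 0 := by
    refine le_antisymm hrS.2 ?_
    by_contra h
    push_neg at h
    have hc : ContinuousWithinAt G (Set.Ici 0) r := hGcont r (Set.mem_Ici.2 hr0)
    have hev : {x | G x < 0} ∈ nhdsWithin r (Set.Ici 0) := hc (Iio_mem_nhds h)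
    have hmono : nhdsWithin r (Set.Ioi r) ≤ nhdsWithin r (Set.Ici 0) :=
      nhdsWithin_mono r fun x hx => Set.mem_Ici.2 (hr0.trans (le_of_lt hx))
    have hev' : {x | G x < 0} ∈ nhdsWithin r (Set.Ioi r) := hmono hev
    obtain ⟨x, hx1, hx2⟩ := (Filter.eventually_iff.2 hev').and self_mem_nhdsWithin |>.exists
    exact absurd (hlub.1 ⟨hr0.trans (le_of_lt hx2), hx1.le⟩) (not_le.2 hx2)
  -- G is monotone in the relevant range
  have hGmono : ∀ a b : ℝ, 0 ≤ a → r < b → a ≤ b → G a ≤ G b := by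
    intro a b ha hb hab
    rcases le_or_gt a r with h | h
    · have hGa : G a ≤ 0 := by
        rcases eq_or_lt_of_le hr0 with h0 | h0
        · have : a = 0 := le_antisymm (h.trans h0.symm.le) ha
          rw [this]; exact hG0
        · have hc0 : 0 ≤ a / r := div_nonneg ha hr0
          have hc1 : a / r ≤ 1 := (div_le_one h0).2 h
          have hcomb := hGconv.2 (Set.mem_Ici.2 (le_refl 0)) (Set.mem_Ici.2 hr0)
            (by linarith : (0:ℝ) ≤ 1 - a / r) hc0 (by ring)
          have heq : (1 - a / r) • (0:ℝ) + (a / r) • r = a := by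
            simp only [smul_eq_mul, mul_zero, zero_add]; field_simp
          rw [heq] at hcomb
          simp only [smul_eq_mul] at hcomb
          have h1 : (1 - a / r) * G 0 ≤ 0 := mul_nonpos_of_nonneg_of_nonpos (by linarith) hG0
          have h2 : a / r * G r = 0 := by rw [hGr, mul_zero]
          linarith
      exact hGa.trans (hposr b hb).le
    · rcases eq_or_lt_of_le hab with rfl | hab'
      · exact le_refl _
      · have hslope := hGconv.slope_mono_adjacent (Set.mem_Ici.2 hr0)
          (Set.mem_Ici.2 (hr0.trans (hb.le))) h hab'
        have h1 : 0 < (G a - G r) / (a - r) :=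
          div_pos (by rw [hGr]; linarith [hposr a h]) (by linarith)
        have hba : 0 < b - a := by linarith
        have := mul_pos (lt_of_lt_of_le h1 hslope) hba
        rw [div_mul_cancel₀ _ (by linarith : b - a ≠ 0)] at this
        linarith
  -- the function g = 1/G and its properties
  set g : ℝ → ℝ := fun y => (G y)⁻¹ with hgdef
  have hgcont : ContinuousOn g (Set.Ioi r) :=
    (hGcont.mono fun x hx => Set.mem_Ici.2 (hr0.trans (le_of_lt hx))).inv₀
      fun x hx => (hposr x hx).ne'
  have hgii : ∀ a b : ℝ, r < a → r < b → IntervalIntegrable g volume a b := by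
    intro a b ha hb
    apply ContinuousOn.intervalIntegrable
    refine hgcont.mono fun x hx => ?_
    rcases Set.mem_uIcc.1 hx with ⟨h1, _⟩ | ⟨h1, _⟩
    · exact lt_of_lt_of_le ha h1
    · exact lt_of_lt_of_le hb h1
  have hgInt : IntegrableOn g (Set.Ioi θ) := by
    have : IntegrableOn (fun x => 1 / G x) (Set.Ioi θ) :=
      hint.mono_set Set.Ioi_subset_Ici_self
    simpa only [one_div] using this
  set F : ℝ → ℝ := fun x => ∫ y in θ..x, g y with hFdef
  set L : ℝ := ∫ y in Set.Ioi θ, g y with hLdef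
  set Φ : ℝ → ℝ := fun x => L - F x with hΦdef
  have hFtend : Tendsto F atTop (nhds L) :=
    intervalIntegral_tendsto_integral_Ioi θ hgInt tendsto_id
  have hΦtend0 : Tendsto Φ atTop (nhds 0) := by
    have := Filter.Tendsto.sub
      (tendsto_const_nhds : Tendsto (fun _ : ℝ => L) atTop (nhds L)) hFtend
    simpa using this
  have hΦanti : ∀ a b : ℝ, r < a → a < b → Φ b < Φ a := by
    intro a b ha hab
    have hpos : 0 < ∫ y in a..b, g y :=
      intervalIntegral.intervalIntegral_pos_of_pos_on (hgii a b ha (ha.trans hab))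
        (fun x hx => inv_pos.2 (hposr x (ha.trans hx.1))) hab
    have hsplit : F a + ∫ y in a..b, g y = F b :=
      intervalIntegral.integral_add_adjacent_intervals (hgii θ a hrθ' ha)
        (hgii a b ha (ha.trans hab))
    simp only [hΦdef]
    linarith
  have hΦanti' : ∀ a b : ℝ, r < a → a ≤ b → Φ b ≤ Φ a := by
    intro a b ha hab
    rcases eq_or_lt_of_le hab with rfl | h
    · exact le_refl _
    · exact (hΦanti a b ha h).le
  have hΦpos : ∀ x : ℝ, r < x → 0 < Φ x := by
    intro x hx
    have h1 : Φ (x + 1) < Φ x := hΦanti x (x + 1) hx (by linarith)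
    have h2 : 0 ≤ Φ (x + 1) := by
      refine le_of_tendsto hΦtend0 ?_
      filter_upwards [eventually_ge_atTop (x + 1)] with y hy
      exact hΦanti' (x + 1) y (by linarith) hy
    linarith
  -- the linear bound near r
  have hGlin : ∀ y : ℝ, r < y → y ≤ θ → G y ≤ (y - r) / (θ - r) * G θ := by
    intro y hy hyθ
    have hθr : 0 < θ - r := by linarith
    have ha0 : 0 ≤ (θ - y) / (θ - r) := div_nonneg (by linarith) hθr.le
    have hb0 : 0 ≤ (y - r) / (θ - r) := div_nonneg (by linarith) hθr.le
    have hab : (θ - y) / (θ - r) + (y - r) / (θ - r) = 1 := by field_simp; ring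
    have hcomb := hGconv.2 (Set.mem_Ici.2 hr0) (Set.mem_Ici.2 (hr0.trans hrθ))
      ha0 hb0 hab
    have heq : ((θ - y) / (θ - r)) • r + ((y - r) / (θ - r)) • θ = y := by
      have hne : θ - r ≠ 0 := hθr.ne'
      rw [smul_eq_mul, smul_eq_mul]
      field_simp; ring
    rw [heq] at hcomb
    simp only [smul_eq_mul] at hcomb
    rw [hGr, mul_zero, zero_add] at hcomb
    exact hcomb
  -- Φ blows up near r
  have hΦbig : ∀ M : ℝ, ∃ x : ℝ, r < x ∧ x < θ ∧ M < Φ x := by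
    intro M
    have hθr : 0 < θ - r := by linarith
    set c : ℝ := (θ - r) / G θ with hcdef
    have hc : 0 < c := div_pos hθr hGθ
    set K : ℝ := max ((M - L + 1) / c) 0 + 1 with hKdef
    have hK : 0 < K := by positivity
    set x : ℝ := r + (θ - r) * Real.exp (-K) with hxdef
    have hx1 : r < x := by
      have : 0 < (θ - r) * Real.exp (-K) := mul_pos hθr (Real.exp_pos _)
      linarith
    have hx2 : x < θ := by
      have h1 : Real.exp (-K) < 1 := Real.exp_lt_one_iff.2 (by linarith)
      nlinarith
    refine ⟨x, hx1, hx2, ?_⟩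
    -- lower bound the integral from x to θ
    have hkcont : ContinuousOn (fun y : ℝ => c * (y - r)⁻¹) (Set.uIcc x θ) := by
      rw [Set.uIcc_of_le hx2.le]
      refine (continuousOn_const.mul ((continuousOn_id.sub continuousOn_const).inv₀
        fun y hy => ?_))
      have : r < y := lt_of_lt_of_le hx1 hy.1
      exact sub_ne_zero.2 this.ne'
    have hkint : IntervalIntegrable (fun y : ℝ => c * (y - r)⁻¹) volume x θ :=
      hkcont.intervalIntegrable
    have hptwise : ∀ y ∈ Set.Icc x θ, c * (y - r)⁻¹ ≤ g y := by
      intro y hy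
      have hry : r < y := lt_of_lt_of_le hx1 hy.1
      have hGy : 0 < G y := hposr y hry
      have hlin := hGlin y hry hy.2
      have hbb : 0 < (y - r) / (θ - r) * G θ :=
        mul_pos (div_pos (by linarith) hθr) hGθ
      have := one_div_le_one_div_of_le hGy hlin
      rw [one_div, one_div] at this
      calc c * (y - r)⁻¹ = ((y - r) / (θ - r) * G θ)⁻¹ := by
            rw [hcdef]; field_simp
        _ ≤ (G y)⁻¹ := this
    have hmono_int : (∫ y in x..θ, c * (y - r)⁻¹) ≤ ∫ y in x..θ, g y :=
      intervalIntegral.integral_mono_on hx2.le hkint (hgii x θ hx1 hrθ') hptwise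
    have hcomp : (∫ y in x..θ, (y - r)⁻¹) = Real.log ((θ - r) / (x - r)) := by
      have h1 : (∫ y in x..θ, (y - r)⁻¹) = ∫ y in (x - r)..(θ - r), y⁻¹ :=
        intervalIntegral.integral_comp_sub_right (fun y => y⁻¹) r
      rw [h1]
      have h0 : (0:ℝ) ∉ Set.uIcc (x - r) (θ - r) := by
        rw [Set.uIcc_of_le (by linarith)]
        intro h
        have := h.1
        linarith
      have := integral_one_div h0
      simpa only [one_div] using this
    have hval : (∫ y in x..θ, c * (y - r)⁻¹) = c * K := by
      rw [intervalIntegral.integral_const_mul, hcomp]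
      congr 1
      have : (θ - r) / (x - r) = Real.exp K := by
        rw [hxdef]
        field_simp [Real.exp_ne_zero, (Real.exp_pos (-K)).ne']
        rw [Real.exp_neg]
        field_simp
        ring
      rw [this, Real.log_exp]
    have hsplit : F x + ∫ y in x..θ, g y = F θ :=
      intervalIntegral.integral_add_adjacent_intervals (hgii θ x hrθ' hx1)
        (hgii x θ hx1 hrθ')
    have hFθ : F θ = 0 := intervalIntegral.integral_same
    have hcK : M - L + 1 ≤ c * K := by
      have h1 : (M - L + 1) / c ≤ max ((M - L + 1) / c) 0 := le_max_left _ _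
      have h2 : (M - L + 1) / c ≤ K := by rw [hKdef]; linarith
      calc M - L + 1 = (M - L + 1) / c * c := by field_simp
        _ ≤ K * c := mul_le_mul_of_nonneg_right h2 hc.le
        _ = c * K := mul_comm _ _
    have h5 : c * K ≤ ∫ y in x..θ, g y := by rw [← hval]; exact hmono_int
    simp only [hΦdef]
    linarith
  -- derivative and continuity of Φ
  have hFder : ∀ x : ℝ, r < x → HasDerivAt F (g x) x := by
    intro x hx
    exact intervalIntegral.integral_hasDerivAt_right (hgii θ x hrθ' hx)
      (ContinuousOn.stronglyMeasurableAtFilter isOpen_Ioi hgcont x hx)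
      (hgcont.continuousAt (isOpen_Ioi.mem_nhds hx))
  have hΦder : ∀ x : ℝ, r < x → HasDerivAt Φ (-(g x)) x := fun x hx =>
    (hFder x hx).const_sub L
  have hΦcontAt : ∀ x : ℝ, r < x → ContinuousAt Φ x := fun x hx =>
    (hΦder x hx).continuousAt
  -- surjectivity of Φ onto (0, ∞)
  have hexist : ∀ t : ℝ, 0 < t → ∃ x : ℝ, r < x ∧ Φ x = t := by
    intro t ht
    obtain ⟨a, hra, haθ, hMa⟩ := hΦbig t
    obtain ⟨b, hb1, hb2⟩ := ((hΦtend0.eventually_lt_const ht).and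
      (eventually_ge_atTop a)).exists
    have hab : a ≤ b := hb2
    have hΦc : ContinuousOn Φ (Set.Icc a b) := fun x hx =>
      (hΦcontAt x (lt_of_lt_of_le hra hx.1)).continuousWithinAt
    have hmem : t ∈ Set.Icc (Φ b) (Φ a) := ⟨hb1.le, hMa.le⟩
    obtain ⟨x, hx1, hx2⟩ := intermediate_value_Icc' hab hΦc hmem
    exact ⟨x, lt_of_lt_of_le hra hx1.1, hx2⟩
  -- define v
  set v : ℝ → ℝ := fun t => if ht : 0 < t then (hexist t ht).choose else θ + 1 with hvdef
  have hvr : ∀ t : ℝ, 0 < t → r < v t := by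
    intro t ht
    simp only [hvdef, dif_pos ht]
    exact (hexist t ht).choose_spec.1
  have hvΦ : ∀ t : ℝ, 0 < t → Φ (v t) = t := by
    intro t ht
    simp only [hvdef, dif_pos ht]
    exact (hexist t ht).choose_spec.2
  have hanti : AntitoneOn v (Set.Ioi 0) := by
    intro a ha b hb hab
    by_contra h
    push_neg at h
    have := hΦanti (v a) (v b) (hvr a ha) h
    rw [hvΦ a ha, hvΦ b hb] at this
    exact absurd hab (not_le.2 this)
  -- continuity of v
  have hvcont : ∀ t : ℝ, 0 < t → ContinuousAt v t := by
    intro t ht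
    rw [ContinuousAt]
    refine tendsto_order.2 ⟨?_, ?_⟩
    · intro a ha
      set c : ℝ := max a ((r + v t) / 2) with hcdef
      have hc1 : r < c := lt_max_of_lt_right (by linarith [hvr t ht])
      have hc2 : c < v t := max_lt ha (by linarith [hvr t ht])
      have hΦc : t < Φ c := by
        rw [← hvΦ t ht]
        exact hΦanti c (v t) hc1 hc2
      filter_upwards [Ioo_mem_nhds ht hΦc] with u hu
      by_contra h
      push_neg at h
      have h2 : Φ c ≤ Φ (v u) :=
        hΦanti' (v u) c (hvr u hu.1) (h.trans (le_max_left _ _))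
      rw [hvΦ u hu.1] at h2
      exact absurd hu.2 (not_lt.2 h2)
    · intro b hb
      set c : ℝ := (v t + b) / 2 with hcdef
      have hc1 : r < c := by have := hvr t ht; simp only [hcdef]; linarith
      have hc2 : v t < c := by simp only [hcdef]; linarith
      have hc3 : c < b := by simp only [hcdef]; linarith
      have hΦc : Φ c < t := by
        rw [← hvΦ t ht]
        exact hΦanti (v t) c (hvr t ht) hc2
      filter_upwards [Ioi_mem_nhds hΦc, Ioi_mem_nhds ht] with u hu1 hu2
      have hu0 : 0 < u := hu2
      by_contra h
      push_neg at h
      have h2 : Φ (v u) < Φ c := hΦanti c (v u) hc1 (hc3.trans_le h)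
      rw [hvΦ u hu0] at h2
      exact absurd hu1 (not_lt.2 h2.le)
  have hvconton : ContinuousOn v (Set.Ioi 0) := fun t ht =>
    (hvcont t ht).continuousWithinAt
  -- v blows up at 0+
  have hv0 : Tendsto v (nhdsWithin 0 (Set.Ioi 0)) atTop := by
    rw [tendsto_atTop]
    intro M
    set c : ℝ := max M (r + 1) with hcdef
    have hc : r < c := lt_max_of_lt_right (by linarith)
    have hΦc : 0 < Φ c := hΦpos c hc
    filter_upwards [Ioo_mem_nhdsGT_of_mem ⟨le_refl (0:ℝ), hΦc⟩] with u hu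
    by_contra h
    push_neg at h
    have h2 : Φ c < Φ (v u) :=
      hΦanti (v u) c (hvr u hu.1) (h.trans_le (le_max_left _ _))
    rw [hvΦ u hu.1] at h2
    exact absurd hu.2 (not_lt.2 h2.le)
  -- v tends to r at infinity
  have hvinf : Tendsto v atTop (nhds r) := by
    refine tendsto_order.2 ⟨?_, ?_⟩
    · intro a ha
      filter_upwards [eventually_gt_atTop 0] with u hu
      exact ha.trans (hvr u hu)
    · intro b hb
      set c : ℝ := (r + b) / 2 with hcdef
      have hc1 : r < c := by simp only [hcdef]; linarith
      have hc2 : c < b := by simp only [hcdef]; linarith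
      filter_upwards [eventually_gt_atTop (max (Φ c) 0)] with u hu
      have hu0 : 0 < u := lt_of_le_of_lt (le_max_right _ _) hu
      have huc : Φ c < u := lt_of_le_of_lt (le_max_left _ _) hu
      by_contra h
      push_neg at h
      have h2 : Φ (v u) < Φ c := hΦanti c (v u) hc1 (hc2.trans_le h)
      rw [hvΦ u hu0] at h2
      exact absurd huc (not_lt.2 h2.le)
  -- derivative of v
  have hvder : ∀ t : ℝ, 0 < t → HasDerivAt v (-(G (v t))) t := by
    intro t ht
    have h1 : HasDerivAt Φ (-(g (v t))) (v t) := hΦder _ (hvr t ht)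
    have h2 : (-(g (v t))) ≠ 0 := by
      simp only [hgdef, ne_eq, neg_eq_zero, inv_eq_zero]
      exact (hposr _ (hvr t ht)).ne'
    have h3 : ∀ᶠ y in nhds t, Φ (v y) = y := by
      filter_upwards [Ioi_mem_nhds ht] with y hy
      exact hvΦ y hy
    have h4 := HasDerivAt.of_local_left_inverse (hvcont t ht) h1 h2 h3
    have h5 : (-(g (v t)))⁻¹ = -(G (v t)) := by
      simp only [hgdef]
      rw [inv_neg, inv_inv]
    rwa [h5] at h4
  -- integral equation for v
  have hveq : ∀ s t : ℝ, 0 < s → s ≤ t → v t - v s = -∫ x in s..t, G (v x) := by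
    intro s t hs hst
    have hsub : Set.uIcc s t ⊆ Set.Ioi 0 := by
      rw [Set.uIcc_of_le hst]
      exact fun x hx => lt_of_lt_of_le hs hx.1
    have hder : ∀ x ∈ Set.uIcc s t, HasDerivAt v (-(G (v x))) x := fun x hx =>
      hvder x (hsub hx)
    have hcont : ContinuousOn (fun x => -(G (v x))) (Set.uIcc s t) :=
      (hGcont.comp (hvconton.mono hsub) fun x hx =>
        Set.mem_Ici.2 (hr0.trans (hvr x (hsub hx)).le)).neg
    have hii : IntervalIntegrable (fun x => -(G (v x))) volume s t :=
      hcont.intervalIntegrable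
    have heq := intervalIntegral.integral_eq_sub_of_hasDerivAt hder hii
    rw [← heq, intervalIntegral.integral_neg]
  refine ⟨r, hlub, hGr, v, hvconton, hanti, hvr, hveq, hv0, hvinf, ?_⟩
  -- minimality
  intro w hwcont hw0 hweq hwtop t ht
  have key : ∀ ε : ℝ, 0 < ε → v (t + ε) ≤ w t := by
    intro ε hε
    have hev : ∀ᶠ s in nhdsWithin 0 (Set.Ioi 0), v ε ≤ w s :=
      hwtop.eventually (eventually_ge_atTop (v ε))
    have hev2 : Set.Ioo 0 t ∈ nhdsWithin 0 (Set.Ioi 0) :=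
      Ioo_mem_nhdsGT_of_mem ⟨le_refl (0:ℝ), ht⟩
    obtain ⟨s, hws, hs⟩ := (hev.and hev2).exists
    set u : ℝ → ℝ := fun x => v (x + ε) with hudef
    have hucont : ContinuousOn u (Set.Ioi 0) := by
      intro x hx
      have hx' : (0:ℝ) < x + ε := by have := Set.mem_Ioi.1 hx; linarith
      have hadd : ContinuousAt (fun y : ℝ => y + ε) x := (continuous_add_right ε).continuousAt
      have hc2 : ContinuousAt (v ∘ fun y : ℝ => y + ε) x :=
        ContinuousAt.comp (hvcont (x + ε) hx') hadd
      exact hc2.continuousWithinAt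
    have hur : ∀ x : ℝ, 0 < x → r < u x := fun x hx => hvr _ (by linarith)
    have hueq : ∀ a b : ℝ, 0 < a → a ≤ b → u b - u a = -∫ x in a..b, G (u x) := by
      intro a b ha hab
      have h1 := hveq (a + ε) (b + ε) (by linarith) (by linarith)
      have h2 : (∫ x in a..b, G (v (x + ε))) = ∫ x in (a + ε)..(b + ε), G (v x) :=
        intervalIntegral.integral_comp_add_right (fun x => G (v x)) ε
      simp only [hudef]
      rw [h2]
      exact h1
    have hsu : u s ≤ w s := by
      refine le_trans ?_ hws
      exact hanti (Set.mem_Ioi.2 hε) (Set.mem_Ioi.2 (by have := hs.1; linarith :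
        (0:ℝ) < s + ε)) (by linarith [hs.1])
    exact stmt12_comp G hGcont hr0 hGmono u w hucont hwcont hur hw0 hueq hweq
      hs.1 hs.2.le hsu
  have hlim : Tendsto (fun ε : ℝ => v (t + ε)) (nhdsWithin 0 (Set.Ioi 0)) (nhds (v t)) := by
    have h1 : Tendsto (fun ε : ℝ => t + ε) (nhdsWithin 0 (Set.Ioi 0)) (nhds t) := by
      have h2 : Tendsto (fun ε : ℝ => t + ε) (nhds 0) (nhds (t + 0)) :=
        (continuous_const.add continuous_id).tendsto 0
      rw [add_zero] at h2
      exact h2.mono_left nhdsWithin_le_nhds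
    exact (hvcont t ht).tendsto.comp h1
  refine le_of_tendsto hlim ?_
  filter_upwards [self_mem_nhdsWithin] with ε hε
  exact key ε (Set.mem_Ioi.1 hε)
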